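/- arXiv:1307.1827 — 6 statements merged into one kernel-verified Lean document; each statement's English description precedes it below -/
import Mathlib

section
/- Let (X,ρ) be a metric space, W = {w_1,…,w_k} ⊆ X a finite multiset of size k, and w_opt ∈ X. For each i ∈ [k], let r_i := min{ r ≥ 0 : |B_ρ(w_i,r) ∩ W| > k/2 }, and let i_opt ∈ argmin_{i∈[k]} r_i. Then ρ(w_opt, w_{i_opt}) ≤ 3·Δ_W(w_opt, 0). In particular, if more than half of the points of W lie within distance ε of w_opt, then ρ(w_opt, w_{i_opt}) ≤ 3ε. -/
open scoped Classical

/-- `Delta w x α` is Δ_W(x, α): the minimal `r ≥ 0` such that the number of points of the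
multiset `W = {w 1, …, w k}` within distance `r` of `x` exceeds `k (1/2 + α)`. -/
noncomputable def Delta {X : Type*} [MetricSpace X] {k : ℕ} (w : Fin k → X) (x : X)
    (α : ℝ) : ℝ :=
  sInf {r : ℝ | 0 ≤ r ∧
    (k : ℝ) * (1 / 2 + α) < ((Finset.univ.filter fun i => dist x (w i) ≤ r).card : ℝ)}

theorem stmt1 {X : Type*} [MetricSpace X] {k : ℕ} (hk : 0 < k)
    (w : Fin k → X) (wopt : X)
    (r : Fin k → ℝ)
    (hr : ∀ i, r i = sInf {t : ℝ | 0 ≤ t ∧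
      (k : ℝ) < 2 * ((Finset.univ.filter fun j => dist (w i) (w j) ≤ t).card : ℝ)})
    (iopt : Fin k) (hiopt : ∀ i, r iopt ≤ r i) :
    dist wopt (w iopt) ≤ 3 * Delta w wopt 0 ∧
      ∀ ε : ℝ, 0 ≤ ε →
        (k : ℝ) < 2 * ((Finset.univ.filter fun i => dist wopt (w i) ≤ ε).card : ℝ) →
        dist wopt (w iopt) ≤ 3 * ε := by
  have hkR : (0 : ℝ) < k := by exact_mod_cast hk
  have huniv : (Finset.univ : Finset (Fin k)).Nonempty := ⟨⟨0, hk⟩, Finset.mem_univ _⟩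
  -- a big radius for nonemptiness of the defining sets
  have hbig : ∀ x : X, ∃ T : ℝ, 0 ≤ T ∧ ∀ j, dist x (w j) ≤ T := by
    intro x
    refine ⟨Finset.univ.sup' huniv (fun j => dist x (w j)), ?_, ?_⟩
    · obtain ⟨j, -⟩ := huniv
      exact le_trans dist_nonneg
        (Finset.le_sup' (f := fun j => dist x (w j)) (Finset.mem_univ j))
    · intro j; exact Finset.le_sup' (f := fun j => dist x (w j)) (Finset.mem_univ j)
  have hSne : ∀ x : X, ∃ T : ℝ, 0 ≤ T ∧
      (k : ℝ) < 2 * ((Finset.univ.filter fun j => dist x (w j) ≤ T).card : ℝ) := by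
    intro x
    obtain ⟨T, hT0, hT⟩ := hbig x
    refine ⟨T, hT0, ?_⟩
    have : (Finset.univ.filter fun j => dist x (w j) ≤ T) = Finset.univ := by
      ext j; simp [hT j]
    rw [this]
    simp only [Finset.card_univ, Fintype.card_fin]
    linarith
  -- main part: majority at radius ε implies dist ≤ 3ε
  have hmain : ∀ ε : ℝ, 0 ≤ ε →
      (k : ℝ) < 2 * ((Finset.univ.filter fun i => dist wopt (w i) ≤ ε).card : ℝ) →
      dist wopt (w iopt) ≤ 3 * ε := by
    intro ε hε hmaj
    set A := Finset.univ.filter fun i => dist wopt (w i) ≤ ε with hA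
    have hAne : A.Nonempty := by
      rw [← Finset.card_pos]
      by_contra h
      push_neg at h
      have : A.card = 0 := Nat.le_zero.mp h
      rw [this] at hmaj
      push_cast at hmaj
      linarith
    obtain ⟨i, hiA⟩ := hAne
    have hiε : dist wopt (w i) ≤ ε := (Finset.mem_filter.mp hiA).2
    -- r i ≤ 2ε
    have hri : r i ≤ 2 * ε := by
      rw [hr i]
      apply csInf_le ⟨0, fun t ht => ht.1⟩
      refine ⟨by linarith, ?_⟩
      have hsub : A ⊆ Finset.univ.filter fun j => dist (w i) (w j) ≤ 2 * ε := by
        intro j hj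
        have hjε : dist wopt (w j) ≤ ε := (Finset.mem_filter.mp hj).2
        refine Finset.mem_filter.mpr ⟨Finset.mem_univ j, ?_⟩
        calc dist (w i) (w j) ≤ dist (w i) wopt + dist wopt (w j) := dist_triangle _ _ _
          _ ≤ ε + ε := by rw [dist_comm]; exact add_le_add hiε hjε
          _ = 2 * ε := by ring
      calc (k : ℝ) < 2 * (A.card : ℝ) := hmaj
        _ ≤ 2 * _ := by
            have : (A.card : ℝ) ≤ _ := Nat.cast_le.mpr (Finset.card_le_card hsub)
            linarith
    have hropt : r iopt ≤ 2 * ε := le_trans (hiopt i) hri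
    -- conclude via δ > 0 slack
    refine le_of_forall_pos_le_add ?_
    intro δ hδ
    -- t := r iopt + δ satisfies majority around w iopt
    have hroptlb : 0 ≤ r iopt := by
      rw [hr iopt]
      apply le_csInf
      · obtain ⟨T, hT0, hT⟩ := hSne (w iopt)
        exact ⟨T, hT0, hT⟩
      · exact fun t ht => ht.1
    have hneS : Set.Nonempty {t : ℝ | 0 ≤ t ∧
        (k : ℝ) < 2 * ((Finset.univ.filter fun j => dist (w iopt) (w j) ≤ t).card : ℝ)} := by
      obtain ⟨T, hT0, hT⟩ := hSne (w iopt); exact ⟨T, hT0, hT⟩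
    obtain ⟨s, hs, hslt⟩ := Real.lt_sInf_add_pos hneS hδ
    rw [← hr iopt] at hslt
    set B := Finset.univ.filter fun j => dist (w iopt) (w j) ≤ s with hB
    have hsmaj : (k : ℝ) < 2 * (B.card : ℝ) := hs.2
    -- A and B intersect
    have hABne : (A ∩ B).Nonempty := by
      rw [← Finset.card_pos]
      by_contra h
      push_neg at h
      have hint : (A ∩ B).card = 0 := Nat.le_zero.mp h
      have hsum : (A ∪ B).card + (A ∩ B).card = A.card + B.card :=
        Finset.card_union_add_card_inter A B
      have hle : (A ∪ B).card ≤ k := by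
        have := Finset.card_le_card (Finset.subset_univ (A ∪ B))
        simpa using this
      have : A.card + B.card ≤ k := by omega
      have : ((A.card : ℝ) + B.card) ≤ (k : ℝ) := by exact_mod_cast this
      linarith
    obtain ⟨j, hj⟩ := hABne
    have hjA : dist wopt (w j) ≤ ε := (Finset.mem_filter.mp (Finset.mem_inter.mp hj).1).2
    have hjB : dist (w iopt) (w j) ≤ s := (Finset.mem_filter.mp (Finset.mem_inter.mp hj).2).2
    calc dist wopt (w iopt) ≤ dist wopt (w j) + dist (w j) (w iopt) := dist_triangle _ _ _
      _ ≤ ε + s := by rw [dist_comm (w j)]; exact add_le_add hjA hjB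
      _ ≤ ε + (2 * ε + δ) := by linarith
      _ = 3 * ε + δ := by ring
  constructor
  · -- via Delta
    set D := Delta w wopt 0 with hD
    have hSne0 : {ρ : ℝ | 0 ≤ ρ ∧
        (k : ℝ) * (1 / 2 + 0) < ((Finset.univ.filter fun i => dist wopt (w i) ≤ ρ).card : ℝ)}.Nonempty := by
      obtain ⟨T, hT0, hT⟩ := hSne wopt
      exact ⟨T, hT0, by linarith⟩
    have hD0 : 0 ≤ D := le_csInf hSne0 fun t ht => ht.1
    refine le_of_forall_pos_le_add ?_
    intro δ hδ
    have h3 : (0:ℝ) < δ / 3 := by linarith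
    obtain ⟨s, hs, hslt⟩ : ∃ s ∈ {ρ : ℝ | 0 ≤ ρ ∧
        (k : ℝ) * (1 / 2 + 0) < ((Finset.univ.filter fun i => dist wopt (w i) ≤ ρ).card : ℝ)},
        s < D + δ / 3 := by
      apply Real.lt_sInf_add_pos hSne0 h3 |>.imp
      intro s hs; exact ⟨hs.1, hs.2⟩
    have hsub : (Finset.univ.filter fun i => dist wopt (w i) ≤ s) ⊆
        Finset.univ.filter fun i => dist wopt (w i) ≤ D + δ / 3 := by
      intro j hj
      exact Finset.mem_filter.mpr ⟨Finset.mem_univ j,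
        le_trans (Finset.mem_filter.mp hj).2 hslt.le⟩
    have hcard : ((Finset.univ.filter fun i => dist wopt (w i) ≤ s).card : ℝ) ≤
        ((Finset.univ.filter fun i => dist wopt (w i) ≤ D + δ / 3).card : ℝ) := by
      exact_mod_cast Finset.card_le_card hsub
    have := hmain (D + δ / 3) (by linarith) (by
      have := hs.2
      linarith)
    linarith
  · exact hmain
end

section
/- Let (X,ρ) be a metric space, w_opt ∈ X, and ε > 0. Let w_1,…,w_k be independent X-valued random variables, each satisfying P[ρ(w_opt,w_i) ≤ ε] ≥ 2/3. Set W := {w_1,…,w_k}, for each i let r_i := min{ r ≥ 0 : |B_ρ(w_i,r) ∩ W| > k/2 }, and let ŵ := w_{i_opt} where i_opt ∈ argmin_i r_i. Then with probability at least 1 − e^{−k/18}, ρ(w_opt, ŵ) ≤ 3ε. -/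
open MeasureTheory ProbabilityTheory
open scoped Classical

lemma det_step {X : Type*} [MetricSpace X] {k : ℕ} (hk : 0 < k) (wopt : X) (ε : ℝ)
    (v : Fin k → X) (i0 : Fin k) (r : Fin k → ℝ)
    (hr : ∀ i, r i = sInf {t : ℝ | 0 ≤ t ∧
      (k : ℝ) < 2 * ((Finset.univ.filter fun j => dist (v i) (v j) ≤ t).card : ℝ)})
    (hopt : ∀ i, r i0 ≤ r i)
    (hG : (k : ℝ) < 2 * ((Finset.univ.filter fun j => dist wopt (v j) ≤ ε).card : ℝ)) :
    dist wopt (v i0) ≤ 3 * ε := by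
  haveI : Nonempty (Fin k) := ⟨⟨0, hk⟩⟩
  set G : Finset (Fin k) := Finset.univ.filter fun j => dist wopt (v j) ≤ ε with hGdef
  set S : Fin k → Set ℝ := fun i => {t : ℝ | 0 ≤ t ∧
      (k : ℝ) < 2 * ((Finset.univ.filter fun j => dist (v i) (v j) ≤ t).card : ℝ)} with hSdef
  have hSne : ∀ i, (S i).Nonempty := by
    intro i
    refine ⟨Finset.univ.sup' Finset.univ_nonempty (fun j => dist (v i) (v j)), ?_, ?_⟩
    · have h := Finset.le_sup' (fun j => dist (v i) (v j)) (Finset.mem_univ i)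
      simp only [dist_self] at h
      exact h
    · have : (Finset.univ.filter fun j =>
          dist (v i) (v j) ≤ Finset.univ.sup' Finset.univ_nonempty (fun j => dist (v i) (v j)))
          = Finset.univ := by
        apply Finset.filter_true_of_mem
        intro j _
        exact Finset.le_sup' (fun j => dist (v i) (v j)) (Finset.mem_univ j)
      rw [this]
      simp only [Finset.card_univ, Fintype.card_fin]
      have : (0:ℝ) < k := by exact_mod_cast hk
      linarith
  have hbdd : ∀ i, BddBelow (S i) := fun i => ⟨0, fun t ht => ht.1⟩
  have key : ∀ i, r i ∈ S i := by
    intro i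
    rw [hr i]
    show sInf (S i) ∈ S i
    have h0 : 0 ≤ sInf (S i) := le_csInf (hSne i) (fun t ht => ht.1)
    set A : Finset (Fin k) := Finset.univ.filter fun j => sInf (S i) < dist (v i) (v j) with hAdef
    by_cases hA : A.Nonempty
    · obtain ⟨j0, hj0A, hj0min⟩ := A.exists_min_image (fun j => dist (v i) (v j)) hA
      have hm : sInf (S i) < dist (v i) (v j0) := (Finset.mem_filter.mp hj0A).2
      obtain ⟨s, hsS, hs⟩ := exists_lt_of_csInf_lt (hSne i) hm
      refine ⟨h0, lt_of_lt_of_le hsS.2 ?_⟩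
      have hsub : (Finset.univ.filter fun j => dist (v i) (v j) ≤ s) ⊆
          (Finset.univ.filter fun j => dist (v i) (v j) ≤ sInf (S i)) := by
        intro j hj
        have hjs : dist (v i) (v j) ≤ s := (Finset.mem_filter.mp hj).2
        refine Finset.mem_filter.mpr ⟨Finset.mem_univ j, ?_⟩
        by_contra hlt
        push_neg at hlt
        have hjA : j ∈ A := Finset.mem_filter.mpr ⟨Finset.mem_univ j, hlt⟩
        have := hj0min j hjA
        linarith
      have := Finset.card_le_card hsub
      have : ((Finset.univ.filter fun j => dist (v i) (v j) ≤ s).card : ℝ) ≤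
          ((Finset.univ.filter fun j => dist (v i) (v j) ≤ sInf (S i)).card : ℝ) := by
        exact_mod_cast this
      linarith
    · have : (Finset.univ.filter fun j => dist (v i) (v j) ≤ sInf (S i)) = Finset.univ := by
        apply Finset.filter_true_of_mem
        intro j _
        by_contra hlt
        push_neg at hlt
        exact hA ⟨j, Finset.mem_filter.mpr ⟨Finset.mem_univ j, hlt⟩⟩
      refine ⟨h0, ?_⟩
      rw [this]
      simp only [Finset.card_univ, Fintype.card_fin]
      have : (0:ℝ) < k := by exact_mod_cast hk
      linarith
  -- G is nonempty
  have hGne : G.Nonempty := by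
    rw [Finset.nonempty_iff_ne_empty]
    intro h
    rw [h] at hG
    simp at hG
    have : (0:ℝ) ≤ k := by exact_mod_cast Nat.zero_le k
    linarith
  obtain ⟨i1, hi1⟩ := hGne
  -- r i1 ≤ 2ε
  have hri1 : r i1 ≤ 2 * ε := by
    rw [hr i1]
    apply csInf_le (hbdd i1)
    have hεnn : 0 ≤ ε := le_trans dist_nonneg (Finset.mem_filter.mp hi1).2
    refine ⟨by linarith, ?_⟩
    have hsub : G ⊆ Finset.univ.filter fun j => dist (v i1) (v j) ≤ 2 * ε := by
      intro j hj
      refine Finset.mem_filter.mpr ⟨Finset.mem_univ j, ?_⟩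
      have h1 : dist wopt (v i1) ≤ ε := (Finset.mem_filter.mp hi1).2
      have h2 : dist wopt (v j) ≤ ε := (Finset.mem_filter.mp hj).2
      calc dist (v i1) (v j) ≤ dist (v i1) wopt + dist wopt (v j) := dist_triangle _ _ _
        _ ≤ ε + ε := by rw [dist_comm]; linarith
        _ = 2 * ε := by ring
    have := Finset.card_le_card hsub
    have hc : ((G.card : ℕ) : ℝ) ≤
        ((Finset.univ.filter fun j => dist (v i1) (v j) ≤ 2 * ε).card : ℝ) := by
      exact_mod_cast this
    linarith
  have hr0 : r i0 ≤ 2 * ε := le_trans (hopt i1) hri1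
  -- B ∩ G nonempty
  have hB := key i0
  set B : Finset (Fin k) := Finset.univ.filter fun j => dist (v i0) (v j) ≤ r i0 with hBdef
  have hBcard : (k : ℝ) < 2 * (B.card : ℝ) := hB.2
  have hinter : (B ∩ G).Nonempty := by
    rw [Finset.nonempty_iff_ne_empty]
    intro h
    have hdisj : Disjoint B G := Finset.disjoint_iff_inter_eq_empty.mpr h
    have h1 : (B ∪ G).card = B.card + G.card := Finset.card_union_of_disjoint hdisj
    have h2 : (B ∪ G).card ≤ k := by
      have := Finset.card_le_univ (B ∪ G)
      simpa using this
    rw [h1] at h2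
    have : ((B.card : ℝ) + (G.card : ℝ)) ≤ k := by exact_mod_cast h2
    linarith
  obtain ⟨j, hj⟩ := hinter
  have hjB : dist (v i0) (v j) ≤ r i0 := (Finset.mem_filter.mp (Finset.mem_inter.mp hj).1).2
  have hjG : dist wopt (v j) ≤ ε := (Finset.mem_filter.mp (Finset.mem_inter.mp hj).2).2
  calc dist wopt (v i0) ≤ dist wopt (v j) + dist (v j) (v i0) := dist_triangle _ _ _
    _ ≤ ε + r i0 := by rw [dist_comm (v j) (v i0)]; linarith
    _ ≤ ε + 2 * ε := by linarith
    _ = 3 * ε := by ring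

open MeasureTheory ProbabilityTheory
open scoped Classical

lemma chernoff_key : (Real.exp (Real.log 2 / 2) * (2/3) : ℝ) ≤ Real.exp (-(1:ℝ)/18) := by
  have hc : (0:ℝ) ≤ Real.exp (Real.log 2 / 2) * (2/3) := by positivity
  have hd : (0:ℝ) ≤ Real.exp (-(1:ℝ)/18) := (Real.exp_pos _).le
  have hsq : (Real.exp (Real.log 2 / 2) * (2/3))^2 ≤ (Real.exp (-(1:ℝ)/18))^2 := by
    have h1 : (Real.exp (Real.log 2 / 2))^2 = 2 := by
      rw [← Real.exp_nat_mul]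
      norm_num
      rw [show (2:ℝ) * (Real.log 2 / 2) = Real.log 2 by ring, Real.exp_log two_pos]
    have h2 : (Real.exp (-(1:ℝ)/18))^2 = Real.exp (-(1:ℝ)/9) := by
      rw [← Real.exp_nat_mul]; congr 1; ring
    have h3 : (8:ℝ)/9 ≤ Real.exp (-(1:ℝ)/9) := by
      have := Real.add_one_le_exp (-(1:ℝ)/9)
      linarith
    rw [h2]
    calc (Real.exp (Real.log 2 / 2) * (2/3))^2 = (Real.exp (Real.log 2 / 2))^2 * (4/9) := by ring
      _ = 8/9 := by rw [h1]; ring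
      _ ≤ _ := h3
  exact (pow_le_pow_iff_left₀ hc hd two_ne_zero).mp hsq


/-- **Robust approximation (Algorithm 2 / Proposition 4).**  Let `(X, ρ)` be a metric space,
`wopt ∈ X`, `ε > 0`, and let `w₁, …, w_k` be independent `X`-valued random variables each
satisfying `P[ρ(wopt, wᵢ) ≤ ε] ≥ 2/3`.  For each `i`, let
`rᵢ := min { r ≥ 0 : |B(wᵢ, r) ∩ W| > k/2 }` where `W = {w₁, …, w_k}`, and let
`ŵ := w_{iopt}` for `iopt ∈ argminᵢ rᵢ`.  Then with probability at least `1 - e^{-k/18}`,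
`ρ(wopt, ŵ) ≤ 3 ε`. -/
theorem stmt2 {X : Type*} [MetricSpace X] [MeasurableSpace X] [OpensMeasurableSpace X]
    {Ω : Type*} [MeasurableSpace Ω] (P : Measure Ω) [IsProbabilityMeasure P]
    {k : ℕ} (hk : 0 < k)
    (wopt : X) (ε : ℝ) (hε : 0 < ε)
    (w : Fin k → Ω → X) (hmeas : ∀ i, Measurable (w i))
    (hindep : iIndepFun w P)
    (happrox : ∀ i, P {ω | dist wopt (w i ω) ≤ ε} ≥ ENNReal.ofReal (2 / 3))
    (r : Fin k → Ω → ℝ)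
    (hr : ∀ i ω, r i ω = sInf {t : ℝ | 0 ≤ t ∧
      (k : ℝ) < 2 * ((Finset.univ.filter fun j => dist (w i ω) (w j ω) ≤ t).card : ℝ)})
    (iopt : Ω → Fin k) (hiopt : ∀ ω i, r (iopt ω) ω ≤ r i ω) :
    P {ω | dist wopt (w (iopt ω) ω) ≤ 3 * ε} ≥
      ENNReal.ofReal (1 - Real.exp (-(k : ℝ) / 18)) := by

  haveI : Nonempty (Fin k) := ⟨⟨0, hk⟩⟩
  set t : ℝ := -Real.log 2 with hT
  have ht : t ≤ 0 := neg_nonpos.mpr (Real.log_nonneg one_le_two)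
  have het : Real.exp t = 1/2 := by
    rw [hT, Real.exp_neg, Real.exp_log two_pos]; norm_num
  set A : Fin k → Set Ω := fun i => {ω | dist wopt (w i ω) ≤ ε} with hA
  have hAmeas : ∀ i, MeasurableSet (A i) := by
    intro i
    have : A i = (w i) ⁻¹' (Metric.closedBall wopt ε) := by
      ext ω; simp [hA, Metric.mem_closedBall, dist_comm]
    rw [this]
    exact hmeas i Metric.isClosed_closedBall.measurableSet
  set Y : Fin k → Ω → ℝ := fun i ω => if dist wopt (w i ω) ≤ ε then 1 else 0 with hYdef
  have hYmeas : ∀ i, Measurable (Y i) := fun i =>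
    Measurable.ite (hAmeas i) measurable_const measurable_const
  have hYindep : iIndepFun Y P := by
    have h := hindep.comp (fun _ x => if dist wopt x ≤ ε then (1:ℝ) else 0)
      (fun _ => Measurable.ite
        ((isClosed_le (continuous_const.dist continuous_id) continuous_const).measurableSet)
        measurable_const measurable_const)
    exact h
  have hint : ∀ i, Integrable (fun ω => Real.exp (t * Y i ω)) P := by
    intro i
    refine Integrable.mono' (integrable_const (1:ℝ))
      (((hYmeas i).const_mul t).exp.aestronglyMeasurable) ?_
    filter_upwards with ω
    rw [Real.norm_eq_abs, abs_of_pos (Real.exp_pos _)]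
    by_cases h : dist wopt (w i ω) ≤ ε
    · simp only [hYdef, h, if_true, mul_one]
      rw [het]; norm_num
    · simp only [hYdef, h, if_false, mul_zero, Real.exp_zero, le_refl]
  have hp : ∀ i, (2:ℝ)/3 ≤ (P (A i)).toReal := by
    intro i
    have h1 := ENNReal.toReal_mono (measure_ne_top P (A i)) (happrox i)
    rwa [ENNReal.toReal_ofReal (by norm_num)] at h1
  have hmgf : ∀ i, mgf (Y i) P t ≤ 2/3 := by
    intro i
    have hcalc : ∀ ω, Real.exp (t * Y i ω) =
        (A i).indicator (fun _ => Real.exp t - 1) ω + 1 := by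
      intro ω
      by_cases h : dist wopt (w i ω) ≤ ε
      · have hω : ω ∈ A i := h
        simp only [hYdef, h, if_true, mul_one, Set.indicator_of_mem hω]
        ring
      · have hω : ω ∉ A i := h
        simp only [hYdef, h, if_false, mul_zero, Real.exp_zero,
          Set.indicator_of_notMem hω, zero_add]
    have heq : mgf (Y i) P t = (Real.exp t - 1) * (P (A i)).toReal + 1 := by
      unfold mgf
      rw [integral_congr_ae (Filter.Eventually.of_forall hcalc),
        integral_add ((integrable_const _).indicator (hAmeas i)) (integrable_const 1),
        integral_indicator_const _ (hAmeas i), integral_const]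
      simp [measure_univ, mul_comm]
      exact Or.inl rfl
    rw [heq, het]
    have := hp i
    linarith
  have hintsum : Integrable (fun ω => Real.exp (t * (∑ i, Y i) ω)) P :=
    hYindep.integrable_exp_mul_sum hYmeas (fun i _ => hint i)
  have hchern := measure_le_le_exp_mul_mgf (μ := P) (X := ∑ i, Y i) ((k:ℝ)/2) ht hintsum
  rw [hYindep.mgf_sum hYmeas] at hchern
  have hprod : ∏ i, mgf (Y i) P t ≤ (2/3:ℝ)^k := by
    calc ∏ i, mgf (Y i) P t ≤ ∏ _i : Fin k, (2/3:ℝ) :=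
          Finset.prod_le_prod (fun i _ => mgf_nonneg) (fun i _ => hmgf i)
      _ = (2/3:ℝ)^k := by simp [div_pow]
  have hbound : (P {ω | (∑ i, Y i) ω ≤ (k:ℝ)/2}).toReal ≤ Real.exp (-(k:ℝ)/18) := by
    calc (P {ω | (∑ i, Y i) ω ≤ (k:ℝ)/2}).toReal
        ≤ Real.exp (-t * ((k:ℝ)/2)) * ∏ i, mgf (Y i) P t := hchern
      _ ≤ Real.exp (-t * ((k:ℝ)/2)) * (2/3:ℝ)^k := by
          exact mul_le_mul_of_nonneg_left hprod (Real.exp_pos _).le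
      _ = (Real.exp (Real.log 2 / 2) * (2/3))^k := by
          rw [mul_pow, ← Real.exp_nat_mul]
          congr 2
          rw [hT]; ring
      _ ≤ (Real.exp (-(1:ℝ)/18))^k := by
          exact pow_le_pow_left₀ (by positivity) chernoff_key k
      _ = Real.exp (-(k:ℝ)/18) := by
          rw [← Real.exp_nat_mul]; congr 1; ring
  set Bad : Set Ω := {ω | (∑ i, Y i) ω ≤ (k:ℝ)/2} with hBad
  have hBadMeas : MeasurableSet Bad := by
    apply measurableSet_le ?_ measurable_const
    have heq : (∑ i, Y i) = fun ω => ∑ i, Y i ω := by ext ω; simp [Finset.sum_apply]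
    rw [heq]
    exact Finset.measurable_sum _ (fun i _ => hYmeas i)
  have hPBad : P Bad ≤ ENNReal.ofReal (Real.exp (-(k:ℝ)/18)) := by
    rw [← ENNReal.ofReal_toReal (measure_ne_top P Bad)]
    exact ENNReal.ofReal_le_ofReal hbound
  have hgood : ENNReal.ofReal (1 - Real.exp (-(k:ℝ)/18)) ≤ P Badᶜ := by
    rw [prob_compl_eq_one_sub hBadMeas]
    calc ENNReal.ofReal (1 - Real.exp (-(k:ℝ)/18))
        = 1 - ENNReal.ofReal (Real.exp (-(k:ℝ)/18)) := by
          rw [ENNReal.ofReal_sub _ (Real.exp_pos _).le, ENNReal.ofReal_one]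
      _ ≤ 1 - P Bad := tsub_le_tsub_left hPBad 1
  refine le_trans hgood (measure_mono ?_)
  intro ω hω
  have hω' : (k:ℝ)/2 < (∑ i, Y i) ω := by
    by_contra hcon
    push_neg at hcon
    exact hω hcon
  have hsum : (k:ℝ) < 2 * ((Finset.univ.filter fun j => dist wopt (w j ω) ≤ ε).card : ℝ) := by
    have h1 : (∑ i, Y i) ω =
        ((Finset.univ.filter fun j => dist wopt (w j ω) ≤ ε).card : ℝ) := by
      rw [Finset.sum_apply]
      simp only [hYdef]
      exact Finset.sum_boole _ _
    rw [h1] at hω'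
    linarith
  exact det_step hk wopt ε (fun j => w j ω) (iopt ω) (fun i => r i ω)
    (fun i => hr i ω) (hiopt ω) hsum
end

section
/- Let Ψ ∈ ℝ^{n×d}, ε ∈ ℝ^n, and y = Ψ w_opt + ε, and let ŵ ∈ argmin_w (1/2)‖Ψw − y‖₂² + λ‖w‖₁ for some λ > 0. Assume |supp(w_opt)| = s and γ(Ψ,s) > 0. If ‖Ψ^T ε‖_∞ ≤ λ/2, then ‖ŵ − w_opt‖₂ ≤ 12λ√s / γ(Ψ,s)². -/
open scoped Classical

/-- The ℓ¹ norm of a vector in `ℝ^d`. -/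
noncomputable def l1norm {d : ℕ} (u : Fin d → ℝ) : ℝ := ∑ j, |u j|

/-- The Euclidean (ℓ²) norm of a vector in `ℝ^d`. -/
noncomputable def l2norm {d : ℕ} (u : Fin d → ℝ) : ℝ := Real.sqrt (∑ j, u j ^ 2)

/-- `‖u_[s]‖₁`: the ℓ¹ norm of the `s` largest coordinates of `u` in absolute value. -/
noncomputable def topL1 {d : ℕ} (s : ℕ) (u : Fin d → ℝ) : ℝ :=
  sSup ((fun J : Finset (Fin d) => ∑ j ∈ J, |u j|) '' {J | J.card = s})

/-- `‖u_[s]‖₂`: the ℓ² norm of the `s` largest coordinates of `u` in absolute value. -/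
noncomputable def topL2 {d : ℕ} (s : ℕ) (u : Fin d → ℝ) : ℝ :=
  sSup ((fun J : Finset (Fin d) => Real.sqrt (∑ j ∈ J, u j ^ 2)) '' {J | J.card = s})

/-- The cone `E_s = { u ≠ 0 : ‖u_{[s]^C}‖₁ ≤ 3 ‖u_[s]‖₁ }`
(note `‖u_{[s]^C}‖₁ = ‖u‖₁ − ‖u_[s]‖₁`). -/
def Econe {d : ℕ} (s : ℕ) (u : Fin d → ℝ) : Prop :=
  u ≠ 0 ∧ l1norm u - topL1 s u ≤ 3 * topL1 s u

/-- The restricted eigenvalue constant `γ(Ψ, s) = min_{u ∈ E_s} ‖Ψu‖₂ / ‖u_[s]‖₂`. -/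
noncomputable def gammaRE {n d : ℕ} (Ψ : Matrix (Fin n) (Fin d) ℝ) (s : ℕ) : ℝ :=
  sInf ((fun u : Fin d → ℝ => l2norm (Ψ.mulVec u) / topL2 s u) '' {u | Econe s u})

lemma my_bddAbove {d s : ℕ} (f : Finset (Fin d) → ℝ) :
    BddAbove (f '' {J : Finset (Fin d) | J.card = s}) :=
  ((Set.toFinite _).image f).bddAbove

lemma le_topL1 {d s : ℕ} (u : Fin d → ℝ) {J : Finset (Fin d)} (hJ : J.card = s) :
    ∑ j ∈ J, |u j| ≤ topL1 s u :=
  le_csSup (my_bddAbove _) ⟨J, hJ, rfl⟩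

lemma le_topL2 {d s : ℕ} (u : Fin d → ℝ) {J : Finset (Fin d)} (hJ : J.card = s) :
    Real.sqrt (∑ j ∈ J, u j ^ 2) ≤ topL2 s u :=
  le_csSup (my_bddAbove _) ⟨J, hJ, rfl⟩

lemma topL2_nonneg {d s : ℕ} (u : Fin d → ℝ) : 0 ≤ topL2 s u :=
  Real.sSup_nonneg fun _ ⟨J, _, hJ⟩ => hJ ▸ Real.sqrt_nonneg _

lemma exists_topJ {d : ℕ} (s : ℕ) (hsd : s ≤ d) (u : Fin d → ℝ) :
    ∃ J : Finset (Fin d), J.card = s ∧ topL1 s u = ∑ j ∈ J, |u j| ∧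
      ∀ k ∉ J, ∀ j ∈ J, |u k| ≤ |u j| := by
  have hne : ((Finset.univ : Finset (Finset (Fin d))).filter fun J => J.card = s).Nonempty := by
    obtain ⟨t, _, ht⟩ := Finset.exists_subset_card_eq (s := (Finset.univ : Finset (Fin d)))
      (n := s) (by simpa using hsd)
    exact ⟨t, by simp [ht]⟩
  obtain ⟨J, hJmem, hJmax⟩ := Finset.exists_max_image _ (fun J => ∑ j ∈ J, |u j|) hne
  have hJcard : J.card = s := by simpa using hJmem
  refine ⟨J, hJcard, ?_, ?_⟩
  · refine le_antisymm (csSup_le ⟨_, ⟨J, hJcard, rfl⟩⟩ ?_) (le_topL1 u hJcard)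
    rintro x ⟨J', hJ', rfl⟩
    exact hJmax J' (by simpa using hJ')
  · intro k hk j hj
    by_contra hlt
    push_neg at hlt
    have hkj : k ∉ J.erase j := fun h => hk (Finset.mem_of_mem_erase h)
    have hcard : (insert k (J.erase j)).card = s := by
      rw [Finset.card_insert_of_notMem hkj, Finset.card_erase_add_one hj, hJcard]
    have hsum : ∑ x ∈ J, |u x| < ∑ x ∈ insert k (J.erase j), |u x| := by
      rw [Finset.sum_insert hkj, ← Finset.sum_erase_add J _ hj]
      linarith
    have := hJmax (insert k (J.erase j)) (by simp [hcard])
    linarith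

lemma l1norm_pos {d : ℕ} {u : Fin d → ℝ} (hu : u ≠ 0) : 0 < l1norm u := by
  obtain ⟨j, hj⟩ := Function.ne_iff.mp hu
  have h1 : 0 < |u j| := abs_pos.mpr hj
  have h2 : |u j| ≤ l1norm u :=
    Finset.single_le_sum (f := fun j => |u j|) (fun i _ => abs_nonneg _) (Finset.mem_univ j)
  linarith

/-- **Theorem 16 (Lasso parameter estimation, fixed design).**  Let `y = Ψ wopt + ε` and
let `ŵ` minimize `(1/2)‖Ψw − y‖₂² + λ‖w‖₁`.  Assume `|supp(wopt)| = s` and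
`γ(Ψ, s) > 0`.  If `‖Ψᵀε‖_∞ ≤ λ/2`, then `‖ŵ − wopt‖₂ ≤ 12 λ √s / γ(Ψ,s)²`. -/
theorem stmt10 {n d : ℕ} (Ψ : Matrix (Fin n) (Fin d) ℝ) (ε : Fin n → ℝ)
    (wopt : Fin d → ℝ) (y : Fin n → ℝ) (hy : y = Ψ.mulVec wopt + ε)
    (s : ℕ) (hs : (Finset.univ.filter fun j => wopt j ≠ 0).card = s)
    (hγ : 0 < gammaRE Ψ s)
    (lam : ℝ) (hlam : 0 < lam)
    (what : Fin d → ℝ)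
    (hmin : ∀ w : Fin d → ℝ,
      (1 / 2) * (∑ i, (Ψ.mulVec what i - y i) ^ 2) + lam * l1norm what ≤
        (1 / 2) * (∑ i, (Ψ.mulVec w i - y i) ^ 2) + lam * l1norm w)
    (hinf : ∀ j : Fin d, |Ψ.transpose.mulVec ε j| ≤ lam / 2) :
    l2norm (what - wopt) ≤ 12 * lam * Real.sqrt s / gammaRE Ψ s ^ 2 := by
  set γ := gammaRE Ψ s with hγdef
  have hγ2 : (0:ℝ) < γ ^ 2 := pow_pos hγ 2
  have hRHSnn : 0 ≤ 12 * lam * Real.sqrt s / γ ^ 2 :=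
    div_nonneg (mul_nonneg (mul_nonneg (by norm_num) hlam.le) (Real.sqrt_nonneg _)) hγ2.le
  set u : Fin d → ℝ := what - wopt with hudef
  by_cases hu0 : u = 0
  · rw [hu0]
    have h0 : l2norm (0 : Fin d → ℝ) = 0 := by simp [l2norm]
    rw [h0]; exact hRHSnn
  -- main case
  set S : Finset (Fin d) := Finset.univ.filter (fun j => wopt j ≠ 0) with hSdef
  have hScard : S.card = s := hs
  have hsd : s ≤ d := by rw [← hScard]; simpa using S.card_le_univ
  set v : Fin n → ℝ := Ψ.mulVec u with hvdef
  have hvmem : ∀ i, v i = Ψ.mulVec what i - Ψ.mulVec wopt i := by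
    intro i
    rw [hvdef, hudef, Matrix.mulVec_sub, Pi.sub_apply]
  have hvi : ∀ i, Ψ.mulVec what i - y i = v i - ε i := by
    intro i; rw [hvmem i, hy, Pi.add_apply]; ring
  have hwi : ∀ i, Ψ.mulVec wopt i - y i = -ε i := by
    intro i; rw [hy, Pi.add_apply]; ring
  have hbasic := hmin wopt
  have hexp : ∑ i, (Ψ.mulVec what i - y i) ^ 2
      = ∑ i, v i ^ 2 - 2 * ∑ i, v i * ε i + ∑ i, ε i ^ 2 := by
    have h : ∀ i ∈ Finset.univ, (Ψ.mulVec what i - y i) ^ 2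
        = v i ^ 2 - 2 * (v i * ε i) + ε i ^ 2 := fun i _ => by rw [hvi i]; ring
    rw [Finset.sum_congr rfl h, Finset.sum_add_distrib, Finset.sum_sub_distrib,
      ← Finset.mul_sum]
  have hexp2 : ∑ i, (Ψ.mulVec wopt i - y i) ^ 2 = ∑ i, ε i ^ 2 :=
    Finset.sum_congr rfl fun i _ => by rw [hwi i]; ring
  rw [hexp, hexp2] at hbasic
  -- cross term bound
  have hcross : ∑ i, v i * ε i = ∑ j, u j * Ψ.transpose.mulVec ε j := by
    simp only [hvdef, Matrix.mulVec, dotProduct, Matrix.transpose_apply,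
      Finset.sum_mul, Finset.mul_sum]
    rw [Finset.sum_comm]
    exact Finset.sum_congr rfl fun j _ => Finset.sum_congr rfl fun i _ => by ring
  have hcross_le : ∑ i, v i * ε i ≤ lam / 2 * l1norm u := by
    rw [hcross, l1norm, Finset.mul_sum]
    refine Finset.sum_le_sum fun j _ => ?_
    calc u j * Ψ.transpose.mulVec ε j ≤ |u j * Ψ.transpose.mulVec ε j| := le_abs_self _
      _ = |u j| * |Ψ.transpose.mulVec ε j| := abs_mul _ _
      _ ≤ |u j| * (lam / 2) := mul_le_mul_of_nonneg_left (hinf j) (abs_nonneg _)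
      _ = lam / 2 * |u j| := by ring
  -- l1 decomposition
  set A : ℝ := ∑ j ∈ S, |u j| with hAdef
  set B : ℝ := ∑ j ∈ Sᶜ, |u j| with hBdef
  have hAnn : 0 ≤ A := Finset.sum_nonneg fun j _ => abs_nonneg _
  have hBnn : 0 ≤ B := Finset.sum_nonneg fun j _ => abs_nonneg _
  have hl1u : l1norm u = A + B := by
    rw [l1norm, hAdef, hBdef, Finset.sum_add_sum_compl]
  have hl1diff : l1norm wopt - l1norm what ≤ A - B := by
    have h1 : l1norm wopt - l1norm what = ∑ j, (|wopt j| - |what j|) := by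
      rw [l1norm, l1norm, Finset.sum_sub_distrib]
    have h2 : ∑ j, (|wopt j| - |what j|)
        = ∑ j ∈ S, (|wopt j| - |what j|) + ∑ j ∈ Sᶜ, (|wopt j| - |what j|) :=
      (Finset.sum_add_sum_compl S _).symm
    have h3 : ∑ j ∈ S, (|wopt j| - |what j|) ≤ A := by
      refine Finset.sum_le_sum fun j _ => ?_
      calc |wopt j| - |what j| ≤ |wopt j - what j| := abs_sub_abs_le_abs_sub _ _
        _ = |u j| := by rw [hudef, Pi.sub_apply, abs_sub_comm]
    have h4 : ∑ j ∈ Sᶜ, (|wopt j| - |what j|) = -B := by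
      rw [hBdef, ← Finset.sum_neg_distrib]
      refine Finset.sum_congr rfl fun j hj => ?_
      have hj0 : wopt j = 0 := by
        simp only [hSdef, Finset.mem_compl, Finset.mem_filter, Finset.mem_univ,
          true_and, not_not] at hj
        exact hj
      have hju : u j = what j := by rw [hudef, Pi.sub_apply, hj0, sub_zero]
      rw [hj0, hju]; simp
    rw [h1, h2, h4]; linarith
  -- key inequality
  have hvsq_nn : 0 ≤ ∑ i, v i ^ 2 := Finset.sum_nonneg fun i _ => sq_nonneg _
  have e1 : lam * (l1norm wopt - l1norm what) ≤ lam * (A - B) :=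
    mul_le_mul_of_nonneg_left hl1diff hlam.le
  have e2 : ∑ i, v i * ε i ≤ lam / 2 * (A + B) := by rw [← hl1u]; exact hcross_le
  have hKey : ∑ i, v i ^ 2 ≤ 3 * lam * A - lam * B := by nlinarith [hbasic, e1, e2]
  have hAB : B ≤ 3 * A := by nlinarith [hKey, hvsq_nn, hlam]
  have hs1 : 0 < s := by
    rcases Nat.eq_zero_or_pos s with h0 | h
    · exfalso
      have hSempty : S = ∅ := Finset.card_eq_zero.mp (hScard.trans h0)
      have hA0 : A = 0 := by rw [hAdef, hSempty, Finset.sum_empty]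
      have : l1norm u ≤ 0 := by rw [hl1u]; linarith
      linarith [l1norm_pos hu0]
    · exact h
  -- Econe membership
  have hAle : A ≤ topL1 s u := le_topL1 u hScard
  have hEcone : Econe s u := ⟨hu0, by rw [hl1u]; linarith⟩
  -- gamma bound
  have hγle : γ ≤ l2norm v / topL2 s u := by
    rw [hγdef, gammaRE]
    refine csInf_le ⟨0, ?_⟩ ⟨u, hEcone, rfl⟩
    rintro x ⟨w, _, rfl⟩
    exact div_nonneg (Real.sqrt_nonneg _) (topL2_nonneg _)
  have hT2pos : 0 < topL2 s u := by
    rcases (topL2_nonneg (s := s) u).eq_or_lt with h | h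
    · exfalso; rw [← h, div_zero] at hγle; linarith
    · exact h
  have hγT2 : γ * topL2 s u ≤ l2norm v := (le_div_iff₀ hT2pos).mp hγle
  have hl2v_sq : l2norm v ^ 2 = ∑ i, v i ^ 2 := Real.sq_sqrt hvsq_nn
  have h8 : (γ * topL2 s u) ^ 2 ≤ l2norm v ^ 2 :=
    pow_le_pow_left₀ (mul_nonneg hγ.le hT2pos.le) hγT2 2
  -- Cauchy-Schwarz on S
  have hCS_S : A ^ 2 ≤ (s : ℝ) * ∑ j ∈ S, u j ^ 2 := by
    have h := sq_sum_le_card_mul_sum_sq (s := S) (f := fun j => |u j|)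
    simp only [sq_abs] at h
    calc A ^ 2 = (∑ j ∈ S, |u j|) ^ 2 := by rw [hAdef]
      _ ≤ (S.card : ℝ) * ∑ j ∈ S, u j ^ 2 := h
      _ = (s : ℝ) * ∑ j ∈ S, u j ^ 2 := by rw [hScard]
  have hA_le_T2 : A ≤ Real.sqrt s * topL2 s u := by
    have h1 : A ≤ Real.sqrt ((s : ℝ) * ∑ j ∈ S, u j ^ 2) := by
      rw [← Real.sqrt_sq hAnn]; exact Real.sqrt_le_sqrt hCS_S
    have h2 : Real.sqrt ((s : ℝ) * ∑ j ∈ S, u j ^ 2)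
        = Real.sqrt s * Real.sqrt (∑ j ∈ S, u j ^ 2) := Real.sqrt_mul (Nat.cast_nonneg s) _
    refine h1.trans ?_
    rw [h2]
    exact mul_le_mul_of_nonneg_left (le_topL2 u hScard) (Real.sqrt_nonneg _)
  -- bound on topL2
  have h9 : ∑ i, v i ^ 2 ≤ 3 * lam * (Real.sqrt s * topL2 s u) := by
    have hA3 : ∑ i, v i ^ 2 ≤ 3 * lam * A := by linarith [hKey, mul_nonneg hlam.le hBnn]
    refine hA3.trans ?_
    exact mul_le_mul_of_nonneg_left hA_le_T2 (by linarith)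
  have h10 : γ ^ 2 * topL2 s u ≤ 3 * lam * Real.sqrt s := by
    have hh : (γ ^ 2 * topL2 s u) * topL2 s u ≤ (3 * lam * Real.sqrt s) * topL2 s u := by
      calc (γ ^ 2 * topL2 s u) * topL2 s u = (γ * topL2 s u) ^ 2 := by ring
        _ ≤ l2norm v ^ 2 := h8
        _ = ∑ i, v i ^ 2 := hl2v_sq
        _ ≤ 3 * lam * (Real.sqrt s * topL2 s u) := h9
        _ = (3 * lam * Real.sqrt s) * topL2 s u := by ring
    exact (mul_le_mul_iff_left₀ hT2pos).mp hh
  have hT2le : topL2 s u ≤ 3 * lam * Real.sqrt s / γ ^ 2 := by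
    rw [le_div_iff₀ hγ2]; linarith [h10]
  -- tail bound via top-s index set J
  obtain ⟨J, hJcard, hJtop, hJmax⟩ := exists_topJ s hsd u
  set T1 : ℝ := ∑ j ∈ J, |u j| with hT1def
  set Q : ℝ := ∑ j ∈ J, u j ^ 2 with hQdef
  have hT1nn : 0 ≤ T1 := Finset.sum_nonneg fun j _ => abs_nonneg _
  have hQnn : 0 ≤ Q := Finset.sum_nonneg fun j _ => sq_nonneg _
  have hl1J : l1norm u = T1 + ∑ j ∈ Jᶜ, |u j| := by
    rw [l1norm, hT1def, Finset.sum_add_sum_compl]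
  have hEJ : ∑ j ∈ Jᶜ, |u j| ≤ 3 * T1 := by
    have h := hEcone.2
    rw [hJtop] at h
    linarith [hl1J, h]
  have htailc : ∀ k ∈ Jᶜ, (s : ℝ) * |u k| ≤ T1 := by
    intro k hk
    have hkJ : k ∉ J := Finset.mem_compl.mp hk
    have h := Finset.sum_le_sum (fun j hj => hJmax k hkJ j hj)
    calc (s : ℝ) * |u k| = ∑ _j ∈ J, |u k| := by
          rw [Finset.sum_const, hJcard, nsmul_eq_mul]
      _ ≤ ∑ j ∈ J, |u j| := h
      _ = T1 := hT1def.symm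
  have hCS_J : T1 ^ 2 ≤ (s : ℝ) * Q := by
    have h := sq_sum_le_card_mul_sum_sq (s := J) (f := fun j => |u j|)
    simp only [sq_abs] at h
    calc T1 ^ 2 = (∑ j ∈ J, |u j|) ^ 2 := by rw [hT1def]
      _ ≤ (J.card : ℝ) * ∑ j ∈ J, u j ^ 2 := h
      _ = (s : ℝ) * Q := by rw [hJcard, hQdef]
  have hspos : (0 : ℝ) < s := by exact_mod_cast hs1
  have hstep : (s : ℝ) * ∑ k ∈ Jᶜ, u k ^ 2 ≤ T1 * ∑ k ∈ Jᶜ, |u k| := by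
    rw [Finset.mul_sum, Finset.mul_sum]
    refine Finset.sum_le_sum fun k hk => ?_
    calc (s : ℝ) * u k ^ 2 = ((s : ℝ) * |u k|) * |u k| := by rw [← sq_abs]; ring
      _ ≤ T1 * |u k| := mul_le_mul_of_nonneg_right (htailc k hk) (abs_nonneg _)
  have htail : ∑ k ∈ Jᶜ, u k ^ 2 ≤ 3 * Q := by
    have h5 : (s : ℝ) * ∑ k ∈ Jᶜ, u k ^ 2 ≤ (s : ℝ) * (3 * Q) := by
      linarith [hstep, mul_le_mul_of_nonneg_left hEJ hT1nn, hCS_J]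
    exact (mul_le_mul_iff_right₀ hspos).mp h5
  have hsumsplit : ∑ j, u j ^ 2 = Q + ∑ k ∈ Jᶜ, u k ^ 2 := by
    rw [hQdef, Finset.sum_add_sum_compl]
  -- final chain
  have hsqrtQ : Real.sqrt Q ≤ topL2 s u := le_topL2 u hJcard
  calc l2norm u = Real.sqrt (∑ j, u j ^ 2) := rfl
    _ ≤ Real.sqrt (4 * Q) := Real.sqrt_le_sqrt (by linarith)
    _ = 2 * Real.sqrt Q := by
        rw [Real.sqrt_mul (by norm_num : (0:ℝ) ≤ 4),
          show (4 : ℝ) = 2 ^ 2 by norm_num, Real.sqrt_sq (by norm_num : (0:ℝ) ≤ 2)]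
    _ ≤ 2 * topL2 s u := by linarith
    _ ≤ 2 * (3 * lam * Real.sqrt s / γ ^ 2) := by linarith
    _ ≤ 12 * lam * Real.sqrt s / γ ^ 2 := by
        have h0 : 0 ≤ lam * Real.sqrt s / γ ^ 2 :=
          div_nonneg (mul_nonneg hlam.le (Real.sqrt_nonneg _)) hγ2.le
        have he : 2 * (3 * lam * Real.sqrt s / γ ^ 2) = 6 * (lam * Real.sqrt s / γ ^ 2) := by
          ring
        have he2 : 12 * lam * Real.sqrt s / γ ^ 2 = 12 * (lam * Real.sqrt s / γ ^ 2) := by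
          ring
        rw [he, he2]; linarith
end

section
/- Let (X,ρ) be a metric space, W ⊆ X a finite multiset of size k ≥ 2, w_opt ∈ X, and α ∈ (0,1/2). Define sumd(w) := Σ_{v∈W} ρ(w,v). Let y ∈ argmin_{w∈W} sumd(w). Then ρ(w_opt, y) ≤ (2 + 1/(2α))·Δ_W(w_opt, α). -/
open scoped Classical

set_option maxHeartbeats 1000000 in
/-- **Theorem 19(1) (set-based geometric median).**  Let `(X, ρ)` be a metric space, `W` a
multiset of size `k ≥ 2`, `wopt ∈ X`, `α ∈ (0, 1/2)`, and let
`y ∈ argmin_{w ∈ W} Σ_{v ∈ W} ρ(w, v)`.  Then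
`ρ(wopt, y) ≤ (2 + 1/(2α)) Δ_W(wopt, α)`. -/
theorem stmt14 {X : Type*} [MetricSpace X] {k : ℕ} (hk : 2 ≤ k)
    (w : Fin k → X) (wopt : X) (α : ℝ) (hα : α ∈ Set.Ioo (0 : ℝ) (1 / 2))
    (iy : Fin k)
    (hiy : ∀ i : Fin k, (∑ j, dist (w iy) (w j)) ≤ ∑ j, dist (w i) (w j)) :
    dist wopt (w iy) ≤ (2 + 1 / (2 * α)) * Delta w wopt α := by
  obtain ⟨hα0, hα2⟩ := hα
  have hk0 : (0:ℝ) < (k:ℝ) := by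
    have : (0:ℕ) < k := by omega
    exact_mod_cast this
  set S : Set ℝ := {r : ℝ | 0 ≤ r ∧
    (k : ℝ) * (1 / 2 + α) < ((Finset.univ.filter fun i => dist wopt (w i) ≤ r).card : ℝ)}
    with hSdef
  have hΔeq : Delta w wopt α = sInf S := rfl
  have hr0 : (∑ i, dist wopt (w i)) ∈ S := by
    constructor
    · positivity
    · have hfull : (Finset.univ.filter fun i => dist wopt (w i) ≤ ∑ i, dist wopt (w i))
          = Finset.univ := by
        apply Finset.filter_true_of_mem
        intro i _
        exact Finset.single_le_sum (f := fun i => dist wopt (w i))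
          (fun j _ => dist_nonneg) (Finset.mem_univ i)
      rw [hfull]
      simp only [Finset.card_univ, Fintype.card_fin]
      nlinarith
  have hSne : S.Nonempty := ⟨_, hr0⟩
  have hΔ0 : 0 ≤ Delta w wopt α := by
    rw [hΔeq]; exact le_csInf hSne (fun r hr => hr.1)
  set Δ := Delta w wopt α with hΔd
  -- the infimum is attained: the count at Δ itself exceeds the threshold
  have hcount : (k : ℝ) * (1/2 + α)
      < ((Finset.univ.filter fun i => dist wopt (w i) ≤ Δ).card : ℝ) := by
    by_contra hcon
    push_neg at hcon
    set T := Finset.univ.filter (fun i => ¬ dist wopt (w i) ≤ Δ) with hT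
    have hTne : T.Nonempty := by
      by_contra hTe
      rw [Finset.not_nonempty_iff_eq_empty, hT, Finset.filter_eq_empty_iff] at hTe
      have hfull : (Finset.univ.filter fun i => dist wopt (w i) ≤ Δ) = Finset.univ := by
        apply Finset.filter_true_of_mem
        intro i hi
        have := hTe (Finset.mem_univ i)
        simpa using this
      rw [hfull] at hcon
      simp only [Finset.card_univ, Fintype.card_fin] at hcon
      nlinarith
    set m₀ := T.inf' hTne (fun i => dist wopt (w i)) with hm₀
    have hΔm₀ : Δ < m₀ := by
      rw [hm₀, Finset.lt_inf'_iff]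
      intro i hi
      rw [hT, Finset.mem_filter] at hi
      exact lt_of_not_ge hi.2
    have hlb : ∀ r ∈ S, m₀ ≤ r := by
      intro r hr
      by_contra hlt
      push_neg at hlt
      have hsub : (Finset.univ.filter fun i => dist wopt (w i) ≤ r)
          ⊆ (Finset.univ.filter fun i => dist wopt (w i) ≤ Δ) := by
        intro i hi
        rw [Finset.mem_filter] at hi ⊢
        refine ⟨Finset.mem_univ i, ?_⟩
        by_contra hnot
        have hiT : i ∈ T := by
          rw [hT, Finset.mem_filter]; exact ⟨Finset.mem_univ i, hnot⟩
        have : m₀ ≤ dist wopt (w i) := Finset.inf'_le _ hiT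
        linarith [hi.2]
      have hcard := Finset.card_le_card hsub
      have := hr.2
      have : (k : ℝ) * (1/2 + α)
          < ((Finset.univ.filter fun i => dist wopt (w i) ≤ Δ).card : ℝ) := by
        calc (k : ℝ) * (1/2 + α)
            < ((Finset.univ.filter fun i => dist wopt (w i) ≤ r).card : ℝ) := hr.2
          _ ≤ _ := by exact_mod_cast hcard
      linarith
    have : m₀ ≤ Δ := by rw [hΔeq]; exact le_csInf hSne hlb
    linarith
  -- Main argument
  set A := Finset.univ.filter (fun i => dist wopt (w i) ≤ Δ) with hA
  set B := Finset.univ.filter (fun i => ¬ dist wopt (w i) ≤ Δ) with hB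
  have hABcard : A.card + B.card = k := by
    rw [hA, hB]
    have := Finset.card_filter_add_card_filter_not
      (s := (Finset.univ : Finset (Fin k))) (p := fun i => dist wopt (w i) ≤ Δ)
    simpa using this
  set M := ((A.card : ℕ) : ℝ) with hM
  set Kr := ((k : ℕ) : ℝ) with hKr
  have hm : Kr * (1/2 + α) < M := hcount
  have hBcard : ((B.card : ℕ) : ℝ) = Kr - M := by
    rw [hM, hKr]
    have : (A.card : ℝ) + (B.card : ℝ) = (k : ℝ) := by exact_mod_cast hABcard
    linarith
  set D := dist wopt (w iy) with hD
  set SA := ∑ j ∈ A, dist (w iy) (w j) with hSA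
  set SB := ∑ j ∈ B, dist (w iy) (w j) with hSB
  have hsplit : SA + SB = ∑ j, dist (w iy) (w j) :=
    Finset.sum_filter_add_sum_filter_not Finset.univ _ _
  have hdA : ∀ j ∈ A, dist wopt (w j) ≤ Δ := by
    intro j hj; rw [hA, Finset.mem_filter] at hj; exact hj.2
  -- lower bound on SA
  have h3 : M * (D - Δ) ≤ SA := by
    have : ∀ j ∈ A, D - Δ ≤ dist (w iy) (w j) := by
      intro j hj
      have h1 := dist_triangle wopt (w j) (w iy)
      have h2 := hdA j hj
      have h4 : dist (w j) (w iy) = dist (w iy) (w j) := dist_comm _ _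
      rw [hD]; linarith
    calc M * (D - Δ) = ∑ _j ∈ A, (D - Δ) := by
          rw [Finset.sum_const, nsmul_eq_mul]
      _ ≤ SA := Finset.sum_le_sum this
  -- the averaging bound
  have h1 : M * (SA + SB) ≤ ∑ a ∈ A, ∑ j, dist (w a) (w j) := by
    calc M * (SA + SB) = ∑ _a ∈ A, ∑ j, dist (w iy) (w j) := by
          rw [Finset.sum_const, nsmul_eq_mul, hsplit]
      _ ≤ ∑ a ∈ A, ∑ j, dist (w a) (w j) :=
          Finset.sum_le_sum (fun a _ => hiy a)
  have hpera : ∀ a ∈ A, ∑ j, dist (w a) (w j)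
      ≤ M * (2 * Δ) + (Kr - M) * (dist (w iy) (w a)) + SB := by
    intro a ha
    have hsplita : ∑ j, dist (w a) (w j)
        = ∑ j ∈ A, dist (w a) (w j) + ∑ j ∈ B, dist (w a) (w j) :=
      (Finset.sum_filter_add_sum_filter_not Finset.univ _ _).symm
    have hboundA : ∑ j ∈ A, dist (w a) (w j) ≤ M * (2 * Δ) := by
      calc ∑ j ∈ A, dist (w a) (w j) ≤ ∑ _j ∈ A, (2 * Δ) := by
            apply Finset.sum_le_sum
            intro j hj
            have t := dist_triangle (w a) wopt (w j)
            have ha' := hdA a ha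
            have hj' := hdA j hj
            have : dist (w a) wopt = dist wopt (w a) := dist_comm _ _
            linarith
        _ = M * (2 * Δ) := by rw [Finset.sum_const, nsmul_eq_mul]
    have hboundB : ∑ j ∈ B, dist (w a) (w j)
        ≤ (Kr - M) * (dist (w iy) (w a)) + SB := by
      calc ∑ j ∈ B, dist (w a) (w j)
          ≤ ∑ j ∈ B, (dist (w iy) (w a) + dist (w iy) (w j)) := by
            apply Finset.sum_le_sum
            intro j hj
            have t := dist_triangle (w a) (w iy) (w j)
            have : dist (w a) (w iy) = dist (w iy) (w a) := dist_comm _ _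
            linarith
        _ = (Kr - M) * (dist (w iy) (w a)) + SB := by
            rw [Finset.sum_add_distrib, Finset.sum_const, nsmul_eq_mul, hBcard, hSB]
    linarith
  have h2 : ∑ a ∈ A, ∑ j, dist (w a) (w j)
      ≤ M * (M * (2 * Δ)) + (Kr - M) * SA + M * SB := by
    calc ∑ a ∈ A, ∑ j, dist (w a) (w j)
        ≤ ∑ a ∈ A, (M * (2 * Δ) + (Kr - M) * (dist (w iy) (w a)) + SB) :=
          Finset.sum_le_sum hpera
      _ = M * (M * (2 * Δ)) + (Kr - M) * SA + M * SB := by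
          rw [Finset.sum_add_distrib, Finset.sum_add_distrib, Finset.sum_const,
            Finset.sum_const, ← Finset.mul_sum, nsmul_eq_mul, nsmul_eq_mul]
  clear_value Δ M Kr D SA SB
  -- combine: (2M - Kr) * SA ≤ 2 Δ M²
  have hkey : (2 * M - Kr) * SA ≤ 2 * Δ * M ^ 2 := by nlinarith [h1, h2]
  have hMpos : 0 < M := by nlinarith
  have h2MK : 0 < 2 * M - Kr := by nlinarith
  have hkey2 : (2 * M - Kr) * (M * (D - Δ)) ≤ 2 * Δ * M ^ 2 := by
    have := mul_le_mul_of_nonneg_left h3 (le_of_lt h2MK)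
    linarith
  -- final arithmetic
  have hfinal : 2 * α * D * ((2 * M - Kr) * M) ≤ (4 * α + 1) * Δ * ((2 * M - Kr) * M) := by
    nlinarith [mul_nonneg (mul_nonneg hΔ0 (le_of_lt hMpos))
      (by nlinarith : (0:ℝ) ≤ 2 * M - (2 * α + 1) * Kr), hkey2,
      mul_pos h2MK hMpos]
  have hprod : 0 < (2 * M - Kr) * M := mul_pos h2MK hMpos
  have hDa : 2 * α * D ≤ (4 * α + 1) * Δ := le_of_mul_le_mul_right hfinal hprod
  have heq : 2 + 1 / (2 * α) = (4 * α + 1) / (2 * α) := by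
    field_simp; ring
  rw [heq, div_mul_eq_mul_div, le_div_iff₀ (by linarith : (0:ℝ) < 2 * α)]
  linarith
end

section
/- Let (X,ρ) be a metric space, W ⊆ X a finite multiset of size k ≥ 2, w_opt ∈ X, and α ∈ (0,1/2). Define sumd(w) := Σ_{v∈W} ρ(w,v) and W₊ := W ∪ {w_opt}. Let ȳ ∈ argmin_{w∈W₊} sumd(w). Then ρ(w_opt, ȳ) ≤ (1 + 1/(2α))·Δ_W(w_opt, α). Moreover, the same bound holds for any point ȳ ∈ X with sumd(ȳ) ≤ sumd(w_opt). -/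
open scoped Classical

lemma delta_spec {X : Type*} [MetricSpace X] {k : ℕ} (hk : 1 ≤ k)
    (w : Fin k → X) (x : X) {α : ℝ} (hα : α ∈ Set.Ioo (0 : ℝ) (1 / 2)) :
    0 ≤ Delta w x α ∧
      (k : ℝ) * (1 / 2 + α) <
        ((Finset.univ.filter fun i => dist x (w i) ≤ Delta w x α).card : ℝ) := by
  obtain ⟨hα0, hα2⟩ := hα
  have hk0 : 0 < k := hk
  have hne : (Finset.univ : Finset (Fin k)).Nonempty := by
    simp [Finset.univ_nonempty_iff, Fin.pos_iff_nonempty.mp hk0]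
  set S : Set ℝ := {r : ℝ | 0 ≤ r ∧
    (k : ℝ) * (1 / 2 + α) < ((Finset.univ.filter fun i => dist x (w i) ≤ r).card : ℝ)}
    with hSdef
  have hΔ : Delta w x α = sInf S := rfl
  set M : ℝ := Finset.univ.sup' hne fun i => dist x (w i) with hM
  have hlt : (k : ℝ) * (1 / 2 + α) < (k : ℝ) := by
    have : (0 : ℝ) < k := by exact_mod_cast hk0
    nlinarith
  have hMS : M ∈ S := by
    constructor
    · obtain ⟨i, hi⟩ := hne
      exact le_trans dist_nonneg (Finset.le_sup' (fun i => dist x (w i)) (Finset.mem_univ i))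
    · have : (Finset.univ.filter fun i => dist x (w i) ≤ M) = Finset.univ := by
        apply Finset.filter_true_of_mem
        intro i _
        exact Finset.le_sup' (fun i => dist x (w i)) (Finset.mem_univ i)
      rw [this]
      simpa using hlt
  have hSne : S.Nonempty := ⟨M, hMS⟩
  have hbdd : BddBelow S := ⟨0, fun r hr => hr.1⟩
  have h0 : 0 ≤ Delta w x α := by
    rw [hΔ]; exact le_csInf hSne fun r hr => hr.1
  refine ⟨h0, ?_⟩
  set Δ := Delta w x α with hΔ'
  by_cases hB : (Finset.univ.filter fun i => Δ < dist x (w i)) = ∅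
  · have : (Finset.univ.filter fun i => dist x (w i) ≤ Δ) = Finset.univ := by
      apply Finset.filter_true_of_mem
      intro i _
      by_contra h
      have : i ∈ Finset.univ.filter fun i => Δ < dist x (w i) := by
        simp [not_le.mp h]
      simp [hB] at this
    rw [this]; simpa using hlt
  · have hBne : (Finset.univ.filter fun i => Δ < dist x (w i)).Nonempty :=
      Finset.nonempty_of_ne_empty hB
    set c := (Finset.univ.filter fun i => Δ < dist x (w i)).inf' hBne (fun i => dist x (w i))
      with hc
    have hΔc : Δ < c := by
      rw [hc, Finset.lt_inf'_iff]
      intro i hi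
      exact (Finset.mem_filter.1 hi).2
    have : sInf S < c := by rw [← hΔ]; exact hΔc
    obtain ⟨r, hrS, hrc⟩ := exists_lt_of_csInf_lt hSne this
    have hsub : (Finset.univ.filter fun i => dist x (w i) ≤ r) ⊆
        (Finset.univ.filter fun i => dist x (w i) ≤ Δ) := by
      intro i hi
      have hir := (Finset.mem_filter.1 hi).2
      simp only [Finset.mem_filter, Finset.mem_univ, true_and]
      by_contra h
      have hiB : i ∈ Finset.univ.filter fun i => Δ < dist x (w i) := by
        simp [not_le.mp h]
      have := Finset.inf'_le (fun i => dist x (w i)) hiB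
      linarith
    calc (k : ℝ) * (1 / 2 + α) < _ := hrS.2
      _ ≤ _ := by exact_mod_cast Finset.card_le_card hsub

/-- **Theorem 19(3) (geometric median over `W₊ = W ∪ {wopt}`).**  Let `(X, ρ)` be a metric
space, `W` a multiset of size `k ≥ 2`, `wopt ∈ X`, `α ∈ (0, 1/2)`, and
`sumd(w) := Σ_{v ∈ W} ρ(w, v)`.  If `ȳ ∈ argmin_{w ∈ W₊} sumd(w)`, then
`ρ(wopt, ȳ) ≤ (1 + 1/(2α)) Δ_W(wopt, α)`; moreover the same bound holds for any `y ∈ X`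
with `sumd(y) ≤ sumd(wopt)`. -/
theorem stmt15 {X : Type*} [MetricSpace X] {k : ℕ} (hk : 2 ≤ k)
    (w : Fin k → X) (wopt : X) (α : ℝ) (hα : α ∈ Set.Ioo (0 : ℝ) (1 / 2))
    (ybar : X)
    (hybar_mem : ybar = wopt ∨ ∃ i : Fin k, ybar = w i)
    (hybar_min : ∀ v : X, (v = wopt ∨ ∃ i : Fin k, v = w i) →
      (∑ j, dist ybar (w j)) ≤ ∑ j, dist v (w j)) :
    dist wopt ybar ≤ (1 + 1 / (2 * α)) * Delta w wopt α ∧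
      ∀ y : X, (∑ j, dist y (w j)) ≤ (∑ j, dist wopt (w j)) →
        dist wopt y ≤ (1 + 1 / (2 * α)) * Delta w wopt α := by
  obtain ⟨hα0, hα2⟩ := hα
  obtain ⟨hΔ0, hcard⟩ := delta_spec (by omega : 1 ≤ k) w wopt ⟨hα0, hα2⟩
  set Δ := Delta w wopt α with hΔdef
  have key : ∀ y : X, (∑ j, dist y (w j)) ≤ (∑ j, dist wopt (w j)) →
      dist wopt y ≤ (1 + 1 / (2 * α)) * Δ := by
    intro y hy
    set A := Finset.univ.filter fun i => dist wopt (w i) ≤ Δ with hA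
    set a : ℝ := (A.card : ℝ) with ha
    set D := dist wopt y with hD
    have hAk : A.card ≤ k := by
      simpa using Finset.card_le_card (Finset.subset_univ A)
    have hcardc : ((Aᶜ.card : ℕ) : ℝ) = (k : ℝ) - a := by
      rw [Finset.card_compl, Fintype.card_fin, Nat.cast_sub hAk]
    have hbA : a * (D - Δ) ≤ ∑ j ∈ A, dist y (w j) := by
      calc a * (D - Δ) = ∑ _j ∈ A, (D - Δ) := by
            rw [Finset.sum_const, nsmul_eq_mul]
        _ ≤ ∑ j ∈ A, dist y (w j) := by
            apply Finset.sum_le_sum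
            intro i hi
            have h1 := (Finset.mem_filter.1 hi).2
            have h2 := dist_triangle wopt (w i) y
            have h3 : dist (w i) y = dist y (w i) := dist_comm _ _
            simp only [hD]
            linarith
    have hbC : (∑ j ∈ Aᶜ, dist wopt (w j)) - ((k : ℝ) - a) * D ≤
        ∑ j ∈ Aᶜ, dist y (w j) := by
      have : ∀ i ∈ Aᶜ, dist wopt (w i) - D ≤ dist y (w i) := by
        intro i _
        have h2 := dist_triangle wopt y (w i)
        simp only [hD]
        linarith
      calc (∑ j ∈ Aᶜ, dist wopt (w j)) - ((k : ℝ) - a) * D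
          = ∑ j ∈ Aᶜ, (dist wopt (w j) - D) := by
            rw [Finset.sum_sub_distrib, Finset.sum_const, nsmul_eq_mul, hcardc]
        _ ≤ ∑ j ∈ Aᶜ, dist y (w j) := Finset.sum_le_sum this
    have hbW : ∑ j ∈ A, dist wopt (w j) ≤ a * Δ := by
      calc ∑ j ∈ A, dist wopt (w j) ≤ ∑ _j ∈ A, Δ := by
            apply Finset.sum_le_sum
            intro i hi
            exact (Finset.mem_filter.1 hi).2
        _ = a * Δ := by rw [Finset.sum_const, nsmul_eq_mul]
    have hsplit_y : ∑ j, dist y (w j) =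
        (∑ j ∈ A, dist y (w j)) + ∑ j ∈ Aᶜ, dist y (w j) :=
      (Finset.sum_add_sum_compl A _).symm
    have hsplit_w : ∑ j, dist wopt (w j) =
        (∑ j ∈ A, dist wopt (w j)) + ∑ j ∈ Aᶜ, dist wopt (w j) :=
      (Finset.sum_add_sum_compl A _).symm
    have hmain : (2 * a - (k : ℝ)) * D ≤ 2 * a * Δ := by nlinarith
    have hka : (k : ℝ) * (1 / 2 + α) < a := hcard
    have hk0 : (0 : ℝ) < k := by exact_mod_cast (by omega : 0 < k)
    have h2ak : 2 * (k : ℝ) * α < 2 * a - k := by nlinarith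
    have h2ak0 : (0 : ℝ) < 2 * a - k := by nlinarith
    have hD0 : 0 ≤ D := dist_nonneg
    have hgoal2 : 2 * α * D ≤ (2 * α + 1) * Δ := by
      nlinarith [mul_le_mul_of_nonneg_left hmain (by linarith : (0:ℝ) ≤ 2 * α),
        mul_nonneg hΔ0 (by linarith : (0:ℝ) ≤ 2 * a - (k:ℝ) - 2 * (k:ℝ) * α)]
    have h2α : (0 : ℝ) < 2 * α := by linarith
    calc D = (2 * α * D) / (2 * α) := by field_simp
      _ ≤ ((2 * α + 1) * Δ) / (2 * α) := by
          exact (div_le_div_iff_of_pos_right h2α).mpr hgoal2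
      _ = (1 + 1 / (2 * α)) * Δ := by field_simp
  exact ⟨key ybar (hybar_min wopt (Or.inl rfl)), key⟩
end

section
/- Consider ℝ^n equipped with the p-norm for p > 1, and let e_1,…,e_n be the standard basis vectors. Let r_{n,p} be the minimal r such that there exists x ∈ ℝ^n with ‖e_i − x‖_p ≤ r for all i ∈ [n]. Then r_{n,p} = ( (1 + (n−1)^{−1/(p−1)})^{−p} + (n−1)(1 + (n−1)^{1/(p−1)})^{−p} )^{1/p}, and this radius is attained at the center x whose coordinates all equal (1 + (n−1)^{1/(p−1)})^{−1}. -/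
open scoped Classical

private lemma tangent_rpow {p : ℝ} (hp : 1 ≤ p) {x x₀ : ℝ} (hx : 0 ≤ x) (hx₀ : 0 < x₀) :
    x₀ ^ p + p * x₀ ^ (p - 1) * (x - x₀) ≤ x ^ p := by
  have hs : -1 ≤ (x - x₀) / x₀ := by
    rw [le_div_iff₀ hx₀]; linarith
  have h := one_add_mul_self_le_rpow_one_add hs hp
  have h1 : (1 + (x - x₀) / x₀) = x / x₀ := by field_simp; ring
  rw [h1, Real.div_rpow hx hx₀.le] at h
  have hx₀p : (0:ℝ) < x₀ ^ p := Real.rpow_pos_of_pos hx₀ p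
  rw [le_div_iff₀ hx₀p] at h
  have haux : x₀ ^ (p - 1) * x₀ = x₀ ^ p := by
    have h2 := (Real.rpow_add hx₀ (p - 1) 1).symm
    rw [Real.rpow_one] at h2
    rw [h2]; ring_nf
  calc x₀ ^ p + p * x₀ ^ (p - 1) * (x - x₀)
      = (1 + p * ((x - x₀) / x₀)) * x₀ ^ p := by
        field_simp
        linear_combination p * (x - x₀) * haux
    _ ≤ x ^ p := h

private lemma key_ineq {p a b c : ℝ} (hp : 1 < p) (ha : 0 < a) (hb : 0 < b)
    (hc : 0 < c) (hsum : b * c + c = 1) (hstat : b ^ (p - 1) = a) (t : ℝ) :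
    (b * c) ^ p + a * c ^ p ≤ |1 - t| ^ p + a * |t| ^ p := by
  have hp1 : 1 ≤ p := hp.le
  have hbc : 0 < b * c := mul_pos hb hc
  have h1 := tangent_rpow hp1 (abs_nonneg (1 - t)) hbc
  have h2 := tangent_rpow hp1 (abs_nonneg t) hc
  have hmul : (b * c) ^ (p - 1) = a * c ^ (p - 1) := by
    rw [Real.mul_rpow hb.le hc.le, hstat]
  rw [hmul] at h1
  have h2a := mul_le_mul_of_nonneg_left h2 ha.le
  have htri : 1 ≤ |1 - t| + |t| := by
    have h := abs_add_le (1 - t) t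
    simp only [sub_add_cancel, abs_one] at h
    exact h
  have hterm : 0 ≤ p * (a * c ^ (p - 1)) * (|1 - t| + |t| - 1) :=
    mul_nonneg (mul_nonneg (by linarith)
      (mul_nonneg ha.le (Real.rpow_nonneg hc.le _))) (by linarith)
  have e : (b * c) ^ p + a * c ^ p =
      ((b * c) ^ p + p * (a * c ^ (p - 1)) * (|1 - t| - b * c))
        + a * (c ^ p + p * c ^ (p - 1) * (|t| - c))
        - p * (a * c ^ (p - 1)) * (|1 - t| + |t| - (b * c + c)) := by ring
  rw [hsum] at e
  linarith [h1, h2a, hterm]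

private lemma sum_single (n : ℕ) (hn : 2 ≤ n) (p : ℝ) (i : Fin n) (y : ℝ) :
    ∑ j, |(Pi.single i 1 : Fin n → ℝ) j - y| ^ p
      = |1 - y| ^ p + ((n : ℝ) - 1) * |y| ^ p := by
  rw [← Finset.add_sum_erase _ _ (Finset.mem_univ i)]
  have h1 : |(Pi.single i 1 : Fin n → ℝ) i - y| ^ p = |1 - y| ^ p := by
    rw [Pi.single_eq_same]
  have h2 : ∑ j ∈ Finset.univ.erase i, |(Pi.single i 1 : Fin n → ℝ) j - y| ^ p
      = ((n : ℝ) - 1) * |y| ^ p := by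
    have : ∀ j ∈ Finset.univ.erase i,
        |(Pi.single i 1 : Fin n → ℝ) j - y| ^ p = |y| ^ p := by
      intro j hj
      rw [Pi.single_eq_of_ne (Finset.ne_of_mem_erase hj), zero_sub, abs_neg]
    rw [Finset.sum_congr rfl this, Finset.sum_const, nsmul_eq_mul,
      Finset.card_erase_of_mem (Finset.mem_univ i), Finset.card_univ, Fintype.card_fin,
      Nat.cast_sub (by omega : 1 ≤ n), Nat.cast_one]
  rw [h1, h2]

/-- **Lemma 24 (inscribed ball of the regular simplex in `ℓ^p`).**  Consider `ℝ^n` with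
the `p`-norm, `p > 1`, and let `e₁, …, e_n` be the standard basis vectors.  Let `r_{n,p}`
be the minimal `r ≥ 0` such that some `x ∈ ℝ^n` satisfies `‖eᵢ − x‖_p ≤ r` for all `i`.
Then `r_{n,p} = ((1 + (n−1)^{−1/(p−1)})^{−p} + (n−1)(1 + (n−1)^{1/(p−1)})^{−p})^{1/p}`,
attained at the center `x` all of whose coordinates equal `(1 + (n−1)^{1/(p−1)})⁻¹`. -/
theorem stmt18 (n : ℕ) (hn : 2 ≤ n) (p : ℝ) (hp : 1 < p) :
    sInf {r : ℝ | 0 ≤ r ∧ ∃ x : Fin n → ℝ, ∀ i : Fin n,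
        (∑ j, |(Pi.single i 1 : Fin n → ℝ) j - x j| ^ p) ^ (1 / p) ≤ r} =
      ((1 + ((n : ℝ) - 1) ^ (-(1 : ℝ) / (p - 1))) ^ (-p) +
        ((n : ℝ) - 1) * (1 + ((n : ℝ) - 1) ^ ((1 : ℝ) / (p - 1))) ^ (-p)) ^ (1 / p) ∧
    ∀ i : Fin n,
      (∑ j, |(Pi.single i 1 : Fin n → ℝ) j -
          (1 + ((n : ℝ) - 1) ^ ((1 : ℝ) / (p - 1)))⁻¹| ^ p) ^ (1 / p) =
        ((1 + ((n : ℝ) - 1) ^ (-(1 : ℝ) / (p - 1))) ^ (-p) +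
          ((n : ℝ) - 1) * (1 + ((n : ℝ) - 1) ^ ((1 : ℝ) / (p - 1))) ^ (-p)) ^ (1 / p) := by
  have hp0 : (0:ℝ) < p := by linarith
  have hp1 : (0:ℝ) < p - 1 := by linarith
  set a : ℝ := (n : ℝ) - 1 with hadef
  have ha : 0 < a := by
    have : (2:ℝ) ≤ (n:ℝ) := by exact_mod_cast hn
    simp only [hadef]; linarith
  set b : ℝ := a ^ ((1:ℝ)/(p-1)) with hbdef
  have hb : 0 < b := Real.rpow_pos_of_pos ha _
  have h1b : (0:ℝ) < 1 + b := by linarith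
  set c : ℝ := (1 + b)⁻¹ with hcdef
  have hc : 0 < c := inv_pos.mpr h1b
  have hsum : b * c + c = 1 := by
    rw [hcdef]; field_simp; ring
  have hstat : b ^ (p - 1) = a := by
    rw [hbdef, ← Real.rpow_mul ha.le, one_div, inv_mul_cancel₀ hp1.ne', Real.rpow_one]
  -- rewrite the stated RHS in terms of b, c
  have hneg : a ^ (-(1 : ℝ) / (p - 1)) = b⁻¹ := by
    rw [neg_div, Real.rpow_neg ha.le, ← hbdef]
  have hbcinv : (1 + b⁻¹)⁻¹ = b * c := by
    have e : 1 + b⁻¹ = (1 + b) * b⁻¹ := by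
      rw [add_mul, one_mul, mul_inv_cancel₀ hb.ne', add_comm]
    rw [hcdef, e, mul_inv, inv_inv]
    ring
  have hbc1 : (1 + b⁻¹) ^ (-p) = (b * c) ^ p := by
    have hpos : (0:ℝ) < 1 + b⁻¹ := by positivity
    rw [Real.rpow_neg hpos.le, ← Real.inv_rpow hpos.le, hbcinv]
  have hc1 : (1 + b) ^ (-p) = c ^ p := by
    rw [Real.rpow_neg h1b.le, ← Real.inv_rpow h1b.le, ← hcdef]
  set m : ℝ := (b * c) ^ p + a * c ^ p with hmdef
  have hm : 0 < m := by positivity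
  have hRHS : ((1 + a ^ (-(1 : ℝ) / (p - 1))) ^ (-p) +
      a * (1 + b) ^ (-p)) = m := by
    rw [hneg, hbc1, hc1]
  -- value at the symmetric point
  have hone_sub : 1 - c = b * c := by linarith
  have habs1 : |1 - c| = b * c := by rw [hone_sub, abs_of_pos (mul_pos hb hc)]
  have habs2 : |c| = c := abs_of_pos hc
  have hsumval : ∀ i : Fin n,
      ∑ j, |(Pi.single i 1 : Fin n → ℝ) j - c| ^ p = m := by
    intro i
    rw [sum_single n hn p i c, habs1, habs2, ← hadef, hmdef]
  constructor
  · -- the sInf equality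
    rw [hRHS]
    set S : Set ℝ := {r : ℝ | 0 ≤ r ∧ ∃ x : Fin n → ℝ, ∀ i : Fin n,
        (∑ j, |(Pi.single i 1 : Fin n → ℝ) j - x j| ^ p) ^ (1 / p) ≤ r} with hSdef
    have hmem : m ^ (1/p) ∈ S := by
      refine ⟨Real.rpow_nonneg hm.le _, fun _ => c, fun i => ?_⟩
      rw [hsumval i]
    have hlow : ∀ r ∈ S, m ^ (1/p) ≤ r := by
      rintro r ⟨hr0, x, hx⟩
      have hSi : ∀ i : Fin n,
          ∑ j, |(Pi.single i 1 : Fin n → ℝ) j - x j| ^ p ≤ r ^ p := by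
        intro i
        have hnn : 0 ≤ ∑ j, |(Pi.single i 1 : Fin n → ℝ) j - x j| ^ p :=
          Finset.sum_nonneg fun j _ => Real.rpow_nonneg (abs_nonneg _) _
        have h := Real.rpow_le_rpow (Real.rpow_nonneg hnn _) (hx i) hp0.le
        rwa [← Real.rpow_mul hnn, one_div, inv_mul_cancel₀ hp0.ne', Real.rpow_one] at h
      have hinner : ∀ j : Fin n,
          m ≤ ∑ i : Fin n, |(Pi.single i 1 : Fin n → ℝ) j - x j| ^ p := by
        intro j
        have hswap : ∀ i : Fin n, (Pi.single i 1 : Fin n → ℝ) j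
            = (Pi.single j 1 : Fin n → ℝ) i := by
          intro i
          simp [Pi.single_apply, eq_comm]
        calc m ≤ |1 - x j| ^ p + a * |x j| ^ p :=
              key_ineq hp ha hb hc hsum hstat (x j)
          _ = ∑ i : Fin n, |(Pi.single j 1 : Fin n → ℝ) i - x j| ^ p := by
              rw [sum_single n hn p j (x j), ← hadef]
          _ = ∑ i : Fin n, |(Pi.single i 1 : Fin n → ℝ) j - x j| ^ p := by
              exact Finset.sum_congr rfl fun i _ => by rw [hswap i]
      have hdouble : (n:ℝ) * m ≤ (n:ℝ) * r ^ p := by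
        have h1 : (n:ℝ) * m ≤ ∑ i : Fin n, ∑ j, |(Pi.single i 1 : Fin n → ℝ) j - x j| ^ p := by
          rw [Finset.sum_comm]
          calc (n:ℝ) * m = ∑ j : Fin n, m := by
                rw [Finset.sum_const, nsmul_eq_mul, Finset.card_univ, Fintype.card_fin]
            _ ≤ _ := Finset.sum_le_sum fun j _ => hinner j
        have h2 : ∑ i : Fin n, ∑ j, |(Pi.single i 1 : Fin n → ℝ) j - x j| ^ p
            ≤ (n:ℝ) * r ^ p := by
          calc _ ≤ ∑ _i : Fin n, r ^ p := Finset.sum_le_sum fun i _ => hSi i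
            _ = (n:ℝ) * r ^ p := by
                rw [Finset.sum_const, nsmul_eq_mul, Finset.card_univ, Fintype.card_fin]
        linarith
      have hn0 : (0:ℝ) < n := by positivity
      have hmr : m ≤ r ^ p := by
        have := (mul_le_mul_iff_right₀ hn0).mp hdouble
        exact this
      calc m ^ (1/p) ≤ (r ^ p) ^ (1/p) :=
            Real.rpow_le_rpow hm.le hmr (by positivity)
        _ = r := by
            rw [← Real.rpow_mul hr0, mul_one_div, div_self hp0.ne', Real.rpow_one]
    exact le_antisymm (csInf_le ⟨m ^ (1/p), hlow⟩ hmem) (le_csInf ⟨_, hmem⟩ hlow)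
  · intro i
    rw [hRHS, hsumval i]
end
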